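/- (Quaternion matrix least squares) Let A ∈ ℍ^{R×N}, B ∈ ℍ^{S×P}, C ∈ ℍ^{R×P} be fixed and define the real-valued cost F(Q) = Tr((C − AQB)^H (C − AQB)) for Q ∈ ℍ^{N×S}. Then the conjugate GHR gradient satisfies ∂F/∂Q* = −½ A^H (C − AQB) B^H at every Q; consequently Q is a stationary point of F if and only if it satisfies the normal equation A^H A Q B B^H = A^H C B^H, and if A^H A and B B^H are invertible the unique stationary point is Q = (A^H A)⁻¹ A^H C B^H (B B^H)⁻¹. -/

import Mathlib

open scoped Quaternion
open Matrix

noncomputable section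

/-- The imaginary unit `i` of the quaternions. -/
def qI : ℍ[ℝ] := ⟨0, 1, 0, 0⟩
/-- The imaginary unit `j` of the quaternions. -/
def qJ : ℍ[ℝ] := ⟨0, 0, 1, 0⟩
/-- The imaginary unit `k` of the quaternions. -/
def qK : ℍ[ℝ] := ⟨0, 0, 0, 1⟩

/-- The `N × S` quaternion matrix with entry `d` at position `(n,s)` and `0` elsewhere. -/
def single {N S : ℕ} (n : Fin N) (s : Fin S) (d : ℍ[ℝ]) : Fin N → Fin S → ℍ[ℝ] :=
  Pi.single n (Pi.single s d)

/-- Real directional (Fréchet) derivative of a scalar function of a matrix variable, in the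
direction `d` at the single entry `(n,s)` (the other entries held fixed). -/
def pd {N S : ℕ} (f : (Fin N → Fin S → ℍ[ℝ]) → ℍ[ℝ]) (Q : Fin N → Fin S → ℍ[ℝ])
    (n : Fin N) (s : Fin S) (d : ℍ[ℝ]) : ℍ[ℝ] :=
  fderiv ℝ f Q (_root_.single n s d)

/-- Conjugate left GHR derivative `∂f/∂q_{ns}*` of a scalar function `f` with respect to the
entry `q_{ns}` of its matrix argument:
`¼(∂f/∂q_a + (∂f/∂q_b) i + (∂f/∂q_c) j + (∂f/∂q_d) k)`. -/
def ghrEStar {N S : ℕ} (f : (Fin N → Fin S → ℍ[ℝ]) → ℍ[ℝ])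
    (Q : Fin N → Fin S → ℍ[ℝ]) (n : Fin N) (s : Fin S) : ℍ[ℝ] :=
  (1 / 4 : ℝ) • (pd f Q n s 1 + pd f Q n s qI * qI + pd f Q n s qJ * qJ + pd f Q n s qK * qK)

/-- The matrix least-squares cost `F(Q) = Tr((C − AQB)^H (C − AQB))`. -/
def lsCost {R N S P : ℕ} (A : Matrix (Fin R) (Fin N) ℍ[ℝ]) (B : Matrix (Fin S) (Fin P) ℍ[ℝ])
    (C : Matrix (Fin R) (Fin P) ℍ[ℝ]) (Q : Fin N → Fin S → ℍ[ℝ]) : ℍ[ℝ] :=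
  ((C - A * Matrix.of Q * B)ᴴ * (C - A * Matrix.of Q * B)).trace

/-! ### Auxiliary material -/

instance : StarModule ℝ ℍ[ℝ] := ⟨fun r a => by simp [Quaternion.star_smul]⟩

set_option maxHeartbeats 1000000 in
lemma quat_key (a b m : ℍ[ℝ]) :
    (1/4:ℝ) • (-(star m * (a * 1 * b) + star (a * 1 * b) * m)
      + -((star m * (a * qI * b) + star (a * qI * b) * m) * qI)
      + -((star m * (a * qJ * b) + star (a * qJ * b) * m) * qJ)
      + -((star m * (a * qK * b) + star (a * qK * b) * m) * qK))
    = -(1/2 : ℍ[ℝ]) * (star a * m * star b) := by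
  have h2 : -(1/2 : ℍ[ℝ]) = (((-(1/2) : ℝ)) : ℍ[ℝ]) := by
    have h0 : ((2:ℝ):ℍ[ℝ]) = 2 := by norm_cast
    rw [one_div, one_div, Quaternion.coe_neg, Quaternion.coe_inv, h0]
  rw [h2]
  have hqIre : qI.re = 0 := rfl
  have hqIimI : qI.imI = 1 := rfl
  have hqIimJ : qI.imJ = 0 := rfl
  have hqIimK : qI.imK = 0 := rfl
  have hqJre : qJ.re = 0 := rfl
  have hqJimI : qJ.imI = 0 := rfl
  have hqJimJ : qJ.imJ = 1 := rfl
  have hqJimK : qJ.imK = 0 := rfl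
  have hqKre : qK.re = 0 := rfl
  have hqKimI : qK.imI = 0 := rfl
  have hqKimJ : qK.imJ = 0 := rfl
  have hqKimK : qK.imK = 1 := rfl
  simp only [hqIre, hqIimI, hqIimJ, hqIimK, hqJre, hqJimI, hqJimJ, hqJimK, hqKre, hqKimI, hqKimJ, hqKimK, Quaternion.ext_iff, Quaternion.re_mul, Quaternion.imI_mul,
    Quaternion.imJ_mul, Quaternion.imK_mul, Quaternion.re_star, Quaternion.imI_star,
    Quaternion.imJ_star, Quaternion.imK_star, Quaternion.re_smul, Quaternion.imI_smul,
    Quaternion.imJ_smul, Quaternion.imK_smul, Quaternion.re_add, Quaternion.imI_add,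
    Quaternion.imJ_add, Quaternion.imK_add, Quaternion.re_neg, Quaternion.imI_neg,
    Quaternion.imJ_neg, Quaternion.imK_neg, Quaternion.re_one, Quaternion.imI_one,
    Quaternion.imJ_one, Quaternion.imK_one, Quaternion.re_coe, Quaternion.imI_coe,
    Quaternion.imJ_coe, Quaternion.imK_coe, smul_eq_mul]
  refine ⟨by ring, by ring, by ring, by ring⟩

section Aux
variable {R N S P : ℕ} (A : Matrix (Fin R) (Fin N) ℍ[ℝ]) (B : Matrix (Fin S) (Fin P) ℍ[ℝ])
    (C : Matrix (Fin R) (Fin P) ℍ[ℝ])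

/-- The continuous linear map picking out the `(n,s)` entry. -/
def prj (n : Fin N) (s : Fin S) : (Fin N → Fin S → ℍ[ℝ]) →L[ℝ] ℍ[ℝ] :=
  (ContinuousLinearMap.proj s : (Fin S → ℍ[ℝ]) →L[ℝ] ℍ[ℝ]).comp
    (ContinuousLinearMap.proj n : (Fin N → Fin S → ℍ[ℝ]) →L[ℝ] (Fin S → ℍ[ℝ]))

lemma prj_apply (n : Fin N) (s : Fin S) (Q : Fin N → Fin S → ℍ[ℝ]) : prj n s Q = Q n s := rfl

/-- Derivative of the `(r,p)` entry of `C - A Q B` as a function of `Q`. -/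
def Lent (r : Fin R) (p : Fin P) : (Fin N → Fin S → ℍ[ℝ]) →L[ℝ] ℍ[ℝ] :=
  -(∑ s' : Fin S, ∑ n' : Fin N, A r n' • ((prj n' s').smulRight (B s' p)))

/-- Quaternion conjugation as a continuous `ℝ`-linear map. -/
def starCLM : ℍ[ℝ] →L[ℝ] ℍ[ℝ] := ((starL' ℝ : ℍ[ℝ] ≃L[ℝ] ℍ[ℝ]) : ℍ[ℝ] →L[ℝ] ℍ[ℝ])

/-- The total derivative of `lsCost` at `Q`. -/
def Ltot (Q : Fin N → Fin S → ℍ[ℝ]) : (Fin N → Fin S → ℍ[ℝ]) →L[ℝ] ℍ[ℝ] :=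
  ∑ p, ∑ r, (star ((C - A * Matrix.of Q * B) r p) • Lent A B r p
    + (starCLM ∘L Lent A B r p).smulRight ((C - A * Matrix.of Q * B) r p))

lemma hasfderiv_ent (Q : Fin N → Fin S → ℍ[ℝ]) (r : Fin R) (p : Fin P) :
    HasFDerivAt (fun Q : Fin N → Fin S → ℍ[ℝ] => (C - A * Matrix.of Q * B) r p)
      (Lent A B r p) Q := by
  have h1 : ∀ (s' : Fin S) (n' : Fin N), HasFDerivAt
      (fun Q : Fin N → Fin S → ℍ[ℝ] => A r n' * (Q n' s' * B s' p))
      (A r n' • ((prj n' s').smulRight (B s' p))) Q := by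
    intro s' n'
    have := (((prj n' s').hasFDerivAt (x := Q)).mul_const' (B s' p)).const_mul (A r n')
    have e : A r n' • MulOpposite.op (B s' p) • prj n' s'
        = A r n' • ((prj n' s').smulRight (B s' p)) := by
      refine ContinuousLinearMap.ext fun x => ?_
      simp [prj_apply]
    rw [e] at this
    simpa only [prj_apply] using this
  have h2 : HasFDerivAt
      (fun Q : Fin N → Fin S → ℍ[ℝ] => ∑ s' : Fin S, ∑ n' : Fin N, A r n' * (Q n' s' * B s' p))
      (∑ s' : Fin S, ∑ n' : Fin N, A r n' • ((prj n' s').smulRight (B s' p))) Q :=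
    HasFDerivAt.fun_sum fun s' _ => HasFDerivAt.fun_sum fun n' _ => h1 s' n'
  have h3 := h2.const_sub (C r p)
  have e : (fun Q : Fin N → Fin S → ℍ[ℝ] => (C - A * Matrix.of Q * B) r p)
      = fun x => C r p - ∑ s', ∑ n', A r n' * (x n' s' * B s' p) := by
    funext Q'
    simp [Matrix.sub_apply, Matrix.mul_apply, Finset.sum_mul, mul_assoc]
  rw [e]
  exact h3

set_option maxHeartbeats 400000 in
lemma lsCost_eq (Q : Fin N → Fin S → ℍ[ℝ]) :
    lsCost A B C Q = ∑ p, ∑ r,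
      star ((C - A * Matrix.of Q * B) r p) * ((C - A * Matrix.of Q * B) r p) := by
  rw [lsCost, Matrix.trace]
  refine Finset.sum_congr rfl fun p _ => ?_
  rw [Matrix.diag_apply, Matrix.mul_apply]
  refine Finset.sum_congr rfl fun r _ => ?_
  rw [Matrix.conjTranspose_apply]

lemma hasfderiv_total (Q : Fin N → Fin S → ℍ[ℝ]) :
    HasFDerivAt (lsCost A B C) (Ltot A B C Q) Q := by
  have h := HasFDerivAt.fun_sum (u := (Finset.univ : Finset (Fin P))) fun p _ =>
    HasFDerivAt.sum (u := (Finset.univ : Finset (Fin R))) fun r _ =>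
      ((hasfderiv_ent A B C Q r p).star.mul' (hasfderiv_ent A B C Q r p))
  have hfun : lsCost A B C = fun Q' => ∑ p, ∑ r,
      (fun y => star ((C - A * Matrix.of y * B) r p)) Q'
        * (fun y => (C - A * Matrix.of y * B) r p) Q' := by
    funext Q'
    exact lsCost_eq A B C Q'
  have e : Ltot A B C Q = ∑ p, ∑ r, (star ((C - A * Matrix.of Q * B) r p) • Lent A B r p
      + MulOpposite.op ((C - A * Matrix.of Q * B) r p) • (starCLM ∘L Lent A B r p)) := by
    simp only [Ltot]
    refine Finset.sum_congr rfl fun p _ => Finset.sum_congr rfl fun r _ => ?_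
    congr 1
  rw [e]
  refine h.congr_of_eventuallyEq (Filter.Eventually.of_forall fun Q' => ?_)
  rw [hfun]
  simp [Finset.sum_apply]

lemma Lent_single (r : Fin R) (p : Fin P) (n : Fin N) (s : Fin S) (d : ℍ[ℝ]) :
    Lent A B r p (_root_.single n s d) = -(A r n * d * B s p) := by
  rw [Lent]
  simp only [ContinuousLinearMap.neg_apply, ContinuousLinearMap.sum_apply,
    ContinuousLinearMap.smul_apply, ContinuousLinearMap.smulRight_apply, prj_apply,
    smul_eq_mul, _root_.single, Pi.single_apply]
  have hx : ∀ (x : Fin S) (x1 : Fin N), (if x1 = n then Pi.single s d else (0 : Fin S → ℍ[ℝ])) x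
      = if x1 = n then (if x = s then d else 0) else 0 := by
    intro x x1; split <;> simp [Pi.single_apply]
  simp only [hx]
  simp [ite_mul, mul_ite, mul_zero, zero_mul, Finset.sum_ite_eq, Finset.sum_ite_eq', mul_assoc]

lemma pd_formula (Q : Fin N → Fin S → ℍ[ℝ]) (n : Fin N) (s : Fin S) (d : ℍ[ℝ]) :
    pd (lsCost A B C) Q n s d
      = -(∑ p, ∑ r, (star ((C - A * Matrix.of Q * B) r p) * (A r n * d * B s p)
          + star (A r n * d * B s p) * ((C - A * Matrix.of Q * B) r p))) := by
  rw [pd, (hasfderiv_total A B C Q).fderiv, Ltot]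
  simp only [ContinuousLinearMap.sum_apply, ContinuousLinearMap.add_apply,
    ContinuousLinearMap.smul_apply, ContinuousLinearMap.smulRight_apply,
    ContinuousLinearMap.comp_apply, Lent_single, smul_eq_mul]
  rw [← Finset.sum_neg_distrib]
  refine Finset.sum_congr rfl fun p _ => ?_
  rw [← Finset.sum_neg_distrib]
  refine Finset.sum_congr rfl fun r _ => ?_
  have hst : ∀ x : ℍ[ℝ], starCLM (-x) = -(star x) := fun x => by simp [starCLM]
  rw [hst]
  simp only [mul_neg, neg_smul, smul_eq_mul, neg_mul]
  rw [neg_add]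

/-- The gradient formula (part 1, pointwise). -/
lemma grad_formula (Q : Fin N → Fin S → ℍ[ℝ]) (n : Fin N) (s : Fin S) :
    ghrEStar (lsCost A B C) Q n s
      = -(1/2 : ℍ[ℝ]) * ((Aᴴ * (C - A * Matrix.of Q * B) * Bᴴ) n s) := by
  have hR : -(1/2 : ℍ[ℝ]) * ((Aᴴ * (C - A * Matrix.of Q * B) * Bᴴ) n s)
      = ∑ p, ∑ r, -(1/2 : ℍ[ℝ])
          * (star (A r n) * ((C - A * Matrix.of Q * B) r p) * star (B s p)) := by
    rw [Matrix.mul_apply, Finset.mul_sum]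
    refine Finset.sum_congr rfl fun p _ => ?_
    rw [Matrix.conjTranspose_apply, Matrix.mul_apply, Finset.sum_mul, Finset.mul_sum]
    refine Finset.sum_congr rfl fun r _ => ?_
    rw [Matrix.conjTranspose_apply]
  rw [hR, ghrEStar, pd_formula, pd_formula, pd_formula, pd_formula]
  simp only [neg_mul, Finset.sum_mul, ← Finset.sum_neg_distrib, ← Finset.sum_add_distrib,
    Finset.smul_sum]
  refine Finset.sum_congr rfl fun p _ => ?_
  refine Finset.sum_congr rfl fun r _ => ?_
  simpa only [neg_mul] using quat_key (A r n) (B s p) ((C - A * Matrix.of Q * B) r p)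

end Aux

/-- **Quaternion matrix least squares**: the conjugate GHR gradient of
`F(Q) = Tr((C − AQB)^H (C − AQB))` is `∂F/∂Q* = −½ A^H (C − AQB) B^H`; consequently `Q` is a
stationary point (the gradient vanishes) iff `A^H A Q B B^H = A^H C B^H`, and when
`A^H A` and `B B^H` are invertible the unique stationary point is
`Q = (A^H A)⁻¹ A^H C B^H (B B^H)⁻¹`. -/
theorem quaternion_matrix_least_squares {R N S P : ℕ}
    (A : Matrix (Fin R) (Fin N) ℍ[ℝ]) (B : Matrix (Fin S) (Fin P) ℍ[ℝ])
    (C : Matrix (Fin R) (Fin P) ℍ[ℝ]) :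
    (∀ Q : Fin N → Fin S → ℍ[ℝ],
      (fun (n : Fin N) (s : Fin S) => ghrEStar (lsCost A B C) Q n s) =
        fun (n : Fin N) (s : Fin S) =>
          -(1 / 2 : ℍ[ℝ]) * ((Aᴴ * (C - A * Matrix.of Q * B) * Bᴴ) n s))
    ∧ (∀ Q : Fin N → Fin S → ℍ[ℝ],
      ((fun (n : Fin N) (s : Fin S) => ghrEStar (lsCost A B C) Q n s) = (fun _ _ => 0) ↔
        Aᴴ * A * Matrix.of Q * (B * Bᴴ) = Aᴴ * C * Bᴴ))
    ∧ (∀ (AI : Matrix (Fin N) (Fin N) ℍ[ℝ]) (BI : Matrix (Fin S) (Fin S) ℍ[ℝ]),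
        AI * (Aᴴ * A) = 1 → (Aᴴ * A) * AI = 1 → BI * (B * Bᴴ) = 1 → (B * Bᴴ) * BI = 1 →
        ∀ Q : Fin N → Fin S → ℍ[ℝ],
          ((fun (n : Fin N) (s : Fin S) => ghrEStar (lsCost A B C) Q n s) = (fun _ _ => 0) ↔
            Matrix.of Q = AI * Aᴴ * C * Bᴴ * BI)) := by
  have part1 : ∀ Q : Fin N → Fin S → ℍ[ℝ],
      (fun (n : Fin N) (s : Fin S) => ghrEStar (lsCost A B C) Q n s) =
        fun (n : Fin N) (s : Fin S) =>
          -(1 / 2 : ℍ[ℝ]) * ((Aᴴ * (C - A * Matrix.of Q * B) * Bᴴ) n s) := by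
    intro Q; funext n s; exact grad_formula A B C Q n s
  have htwo : (2 : ℍ[ℝ]) ≠ 0 := by
    have h0 : ((2:ℝ):ℍ[ℝ]) = 2 := by norm_cast
    rw [← h0, ne_eq, ← Quaternion.coe_zero, Quaternion.coe_injective.eq_iff]
    norm_num
  have hhalf : (-(1/2 : ℍ[ℝ])) ≠ 0 := by
    rw [neg_ne_zero]
    exact div_ne_zero one_ne_zero htwo
  have keyzero : ∀ Q : Fin N → Fin S → ℍ[ℝ],
      ((fun (n : Fin N) (s : Fin S) => ghrEStar (lsCost A B C) Q n s) = (fun _ _ => 0) ↔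
        Aᴴ * (C - A * Matrix.of Q * B) * Bᴴ = 0) := by
    intro Q
    rw [part1 Q]
    constructor
    · intro h
      refine Matrix.ext fun n s => ?_
      have h1 := congrFun (congrFun h n) s
      rcases mul_eq_zero.mp h1 with h2 | h2
      · exact absurd h2 hhalf
      · simpa using h2
    · intro h
      funext n s
      rw [show Aᴴ * (C - A * Matrix.of Q * B) * Bᴴ = 0 from h]
      simp
  have part2 : ∀ Q : Fin N → Fin S → ℍ[ℝ],
      ((fun (n : Fin N) (s : Fin S) => ghrEStar (lsCost A B C) Q n s) = (fun _ _ => 0) ↔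
        Aᴴ * A * Matrix.of Q * (B * Bᴴ) = Aᴴ * C * Bᴴ) := by
    intro Q
    rw [keyzero Q, Matrix.mul_sub, Matrix.sub_mul, sub_eq_zero]
    have hassoc : Aᴴ * (A * Matrix.of Q * B) * Bᴴ = Aᴴ * A * Matrix.of Q * (B * Bᴴ) := by
      simp only [Matrix.mul_assoc]
    rw [hassoc]
    exact eq_comm
  refine ⟨part1, part2, ?_⟩
  intro AI BI hA1 hA2 hB1 hB2 Q
  rw [part2 Q]
  constructor
  · intro h
    calc Matrix.of Q = (1 : Matrix (Fin N) (Fin N) ℍ[ℝ]) * Matrix.of Q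
        * (1 : Matrix (Fin S) (Fin S) ℍ[ℝ]) := by rw [Matrix.one_mul, Matrix.mul_one]
      _ = (AI * (Aᴴ * A)) * Matrix.of Q * ((B * Bᴴ) * BI) := by rw [hA1, hB2]
      _ = AI * (Aᴴ * A * Matrix.of Q * (B * Bᴴ)) * BI := by simp only [Matrix.mul_assoc]
      _ = AI * (Aᴴ * C * Bᴴ) * BI := by rw [h]
      _ = AI * Aᴴ * C * Bᴴ * BI := by simp only [Matrix.mul_assoc]
  · intro h
    rw [h]
    calc Aᴴ * A * (AI * Aᴴ * C * Bᴴ * BI) * (B * Bᴴ)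
        = ((Aᴴ * A) * AI) * (Aᴴ * C * (Bᴴ * (BI * (B * Bᴴ)))) := by simp only [Matrix.mul_assoc]
      _ = Aᴴ * C * Bᴴ := by rw [hA2, hB1, Matrix.one_mul, Matrix.mul_one]
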